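/- For every k ≥ 1, the Möbius transformation (PM)^k P³ sends ∞ to (4k+3)/2, and P(PM)^{k-1}P³ sends ∞ to (4k+1)/(4k-1), where P: x ↦ 1 + 1/x and M: x ↦ 1/(1+x). -/
import Mathlib


/-- The matrix of the Möbius transformation `P : x ↦ 1 + 1/x`. -/
def Pm : Matrix (Fin 2) (Fin 2) ℤ := !![1, 1; 1, 0]

/-- The matrix of the Möbius transformation `M : x ↦ 1/(1+x)`. -/
def Mm : Matrix (Fin 2) (Fin 2) ℤ := !![0, 1; 1, 1]

/-- The image `G(∞)` of the point at infinity under the fractional linear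
transformation with matrix `A`, namely `A₀₀ / A₁₀`. -/
def mobInf (A : Matrix (Fin 2) (Fin 2) ℤ) : ℚ := (A 0 0 : ℚ) / (A 1 0)

lemma PM_pow (n : ℕ) : (Pm * Mm) ^ n = !![1, 2 * (n : ℤ); 0, 1] := by
  induction n with
  | zero => simp [Matrix.one_fin_two]
  | succ n ih =>
    rw [pow_succ, ih, Pm, Mm]
    norm_num [Matrix.mul_fin_two]
    ring_nf

lemma Pm_cube : Pm ^ 3 = !![3, 2; 2, 1] := by
  rw [Pm, pow_succ, pow_two]
  norm_num [Matrix.mul_fin_two]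

/-- For every `k ≥ 1`, `(PM)^k P³ (∞) = (4k+3)/2` and
`P (PM)^(k-1) P³ (∞) = (4k+1)/(4k-1)`. -/
theorem twist_knot_fractions (k : ℕ) (hk : 1 ≤ k) :
    mobInf ((Pm * Mm) ^ k * Pm ^ 3) = (4 * (k : ℚ) + 3) / 2 ∧
    mobInf (Pm * (Pm * Mm) ^ (k - 1) * Pm ^ 3) = (4 * (k : ℚ) + 1) / (4 * (k : ℚ) - 1) := by
  have hk' : ((k - 1 : ℕ) : ℤ) = (k : ℤ) - 1 := by
    have := Nat.cast_sub (R := ℤ) hk; simpa using this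
  constructor
  · rw [PM_pow, Pm_cube, mobInf]
    norm_num [Matrix.mul_fin_two]
    ring_nf
  · rw [PM_pow, Pm_cube, Pm, mobInf]
    have h1 : (4 : ℚ) * k - 1 ≠ 0 := by
      have : (1 : ℚ) ≤ (k : ℚ) := by exact_mod_cast hk
      nlinarith
    norm_num [Matrix.mul_fin_two, hk']
    ring_nf
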